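/- For 1 < p ≤ 2 there is a constant C = C_p such that for all vectors x, y ∈ ℝ^N: 0 ≤ |x+y|^p - |x|^p - p|x|^{p-2} ⟨x, y⟩ ≤ C|y|^p, where |x|^{p-2}x is interpreted as 0 when x = 0. -/

import Mathlib

open Real Set

private lemma sq_rpow_half (r s : ℝ) (hr : 0 ≤ r) : (r ^ 2) ^ (s / 2) = r ^ s := by
  have h : ((2:ℕ):ℝ) * (s / 2) = s := by push_cast; ring
  rw [← Real.rpow_natCast r 2, ← Real.rpow_mul hr, h]

private lemma tangent_rpow {p : ℝ} (hp : 1 ≤ p) {a u : ℝ} (ha : 0 < a) (hu : 0 ≤ u) :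
    a ^ p + p * a ^ (p - 1) * (u - a) ≤ u ^ p := by
  have hs : -1 ≤ u / a - 1 := by
    have : 0 ≤ u / a := div_nonneg hu ha.le
    linarith
  have hb := one_add_mul_self_le_rpow_one_add hs hp
  have h1 : (1 + (u / a - 1)) = u / a := by ring
  rw [h1] at hb
  have hap : 0 < a ^ p := Real.rpow_pos_of_pos ha p
  have hmul := mul_le_mul_of_nonneg_left hb hap.le
  have h2 : a ^ p * (u / a) ^ p = u ^ p := by
    rw [← Real.mul_rpow ha.le (div_nonneg hu ha.le), mul_div_cancel₀ _ ha.ne']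
  have h3 : a ^ (p - 1) = a ^ p / a := Real.rpow_sub_one ha.ne' p
  rw [h3]
  have h4 : a ^ p + p * (a ^ p / a) * (u - a) = a ^ p * (1 + p * (u / a - 1)) := by
    field_simp
  rw [h4]
  calc a ^ p * (1 + p * (u / a - 1)) ≤ a ^ p * (u / a) ^ p := hmul
    _ = u ^ p := h2

set_option maxHeartbeats 1000000 in
/-- For `1 < p ≤ 2` there is `C = C_p` with
`0 ≤ ‖x+y‖^p - ‖x‖^p - p‖x‖^(p-2)⟪x,y⟫ ≤ C‖y‖^p` for all `x, y ∈ ℝ^N`.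
(Note `‖x‖^(p-2) = 0` when `x = 0` since `0^(p-2) = 0` for `p < 2`, and the inner
product vanishes at `x = 0` anyway.) -/
theorem stmt_6 (N : ℕ) (hN : 0 < N) (p : ℝ) (hp1 : 1 < p) (hp2 : p ≤ 2) :
    ∃ C : ℝ, 0 < C ∧ ∀ x y : EuclideanSpace ℝ (Fin N),
      0 ≤ ‖x + y‖ ^ p - ‖x‖ ^ p - p * ‖x‖ ^ (p - 2) * (inner ℝ x y : ℝ) ∧
      ‖x + y‖ ^ p - ‖x‖ ^ p - p * ‖x‖ ^ (p - 2) * (inner ℝ x y : ℝ) ≤ C * ‖y‖ ^ p := by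
  have hp0 : (0:ℝ) < p := by linarith
  have h3p : (1:ℝ) ≤ 3 ^ p := by
    calc (1:ℝ) = (3:ℝ) ^ (0:ℝ) := by rw [Real.rpow_zero]
      _ ≤ 3 ^ p := Real.rpow_le_rpow_of_exponent_le (by norm_num) hp0.le
  refine ⟨3 ^ p + 2 * p, by positivity, fun x y => ?_⟩
  by_cases hx : x = 0
  · subst hx
    simp only [zero_add, norm_zero, inner_zero_left, mul_zero, sub_zero]
    rw [Real.zero_rpow hp0.ne']
    have hyp : 0 ≤ ‖y‖ ^ p := Real.rpow_nonneg (norm_nonneg y) p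
    constructor
    · linarith
    · nlinarith
  by_cases hy : y = 0
  · subst hy
    simp only [add_zero, inner_zero_right, mul_zero, sub_zero, sub_self, norm_zero]
    rw [Real.zero_rpow hp0.ne']
    norm_num
  have ha : 0 < ‖x‖ := norm_pos_iff.mpr hx
  have hc : 0 < ‖y‖ := norm_pos_iff.mpr hy
  have ha0 := ha.le
  have hc0 := hc.le
  -- Lower bound (convexity / tangent line)
  have e1 : ‖x‖ ^ (p - 1) = ‖x‖ ^ (p - 2) * ‖x‖ := by
    rw [show p - 1 = (p - 2) + 1 by ring, Real.rpow_add_one ha.ne']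
  have hlow : ‖x‖ ^ p + p * ‖x‖ ^ (p - 2) * (inner ℝ x y : ℝ) ≤ ‖x + y‖ ^ p := by
    have key : (inner ℝ x y : ℝ) ≤ ‖x‖ * ‖x + y‖ - ‖x‖ ^ 2 := by
      have h1 : (inner ℝ x (x + y) : ℝ) ≤ ‖x‖ * ‖x + y‖ := real_inner_le_norm x (x + y)
      have h2 : (inner ℝ x (x + y) : ℝ) = ‖x‖ ^ 2 + (inner ℝ x y : ℝ) := by
        rw [inner_add_right, real_inner_self_eq_norm_sq]
      linarith
    have hpos : (0:ℝ) ≤ p * ‖x‖ ^ (p - 2) := by positivity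
    have h3 : p * ‖x‖ ^ (p - 2) * (inner ℝ x y : ℝ)
        ≤ p * ‖x‖ ^ (p - 1) * (‖x + y‖ - ‖x‖) := by
      calc p * ‖x‖ ^ (p - 2) * (inner ℝ x y : ℝ)
          ≤ p * ‖x‖ ^ (p - 2) * (‖x‖ * ‖x + y‖ - ‖x‖ ^ 2) :=
            mul_le_mul_of_nonneg_left key hpos
        _ = p * ‖x‖ ^ (p - 1) * (‖x + y‖ - ‖x‖) := by rw [e1]; ring
    have h4 := tangent_rpow hp1.le ha (norm_nonneg (x + y))
    linarith
  refine ⟨by linarith, ?_⟩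
  -- Upper bound
  rcases le_or_gt ‖x‖ (2 * ‖y‖) with hcase | hcase
  · -- Case A : ‖x‖ ≤ 2‖y‖, crude bounds
    have hA1 : ‖x + y‖ ^ p ≤ 3 ^ p * ‖y‖ ^ p := by
      have h1 : ‖x + y‖ ≤ 3 * ‖y‖ := by
        have := norm_add_le x y; linarith
      calc ‖x + y‖ ^ p ≤ (3 * ‖y‖) ^ p :=
            Real.rpow_le_rpow (norm_nonneg _) h1 hp0.le
        _ = 3 ^ p * ‖y‖ ^ p := Real.mul_rpow (by norm_num) hc0
    have hA2 : -(p * ‖x‖ ^ (p - 2) * (inner ℝ x y : ℝ)) ≤ 2 * p * ‖y‖ ^ p := by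
      have hb : |(inner ℝ x y : ℝ)| ≤ ‖x‖ * ‖y‖ := abs_real_inner_le_norm x y
      have h1 : -(p * ‖x‖ ^ (p - 2) * (inner ℝ x y : ℝ)) ≤ p * ‖x‖ ^ (p - 1) * ‖y‖ := by
        have hpos : (0:ℝ) ≤ p * ‖x‖ ^ (p - 2) := by positivity
        have h2 : -(inner ℝ x y : ℝ) ≤ ‖x‖ * ‖y‖ := by
          have := neg_abs_le (inner ℝ x y : ℝ); linarith
        calc -(p * ‖x‖ ^ (p - 2) * (inner ℝ x y : ℝ))
            = p * ‖x‖ ^ (p - 2) * (-(inner ℝ x y : ℝ)) := by ring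
          _ ≤ p * ‖x‖ ^ (p - 2) * (‖x‖ * ‖y‖) := mul_le_mul_of_nonneg_left h2 hpos
          _ = p * ‖x‖ ^ (p - 1) * ‖y‖ := by rw [e1]; ring
      have h3 : ‖x‖ ^ (p - 1) ≤ 2 * ‖y‖ ^ (p - 1) := by
        calc ‖x‖ ^ (p - 1) ≤ (2 * ‖y‖) ^ (p - 1) :=
              Real.rpow_le_rpow ha0 hcase (by linarith)
          _ = 2 ^ (p - 1) * ‖y‖ ^ (p - 1) := Real.mul_rpow (by norm_num) hc0
          _ ≤ 2 * ‖y‖ ^ (p - 1) := by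
              have h4 : (2:ℝ) ^ (p - 1) ≤ 2 ^ (1:ℝ) :=
                Real.rpow_le_rpow_of_exponent_le (by norm_num) (by linarith)
              rw [Real.rpow_one] at h4
              exact mul_le_mul_of_nonneg_right h4 (Real.rpow_nonneg hc0 _)
      have h5 : ‖y‖ ^ (p - 1) * ‖y‖ = ‖y‖ ^ p := by
        rw [← Real.rpow_add_one hc.ne' (p - 1), sub_add_cancel]
      calc -(p * ‖x‖ ^ (p - 2) * (inner ℝ x y : ℝ)) ≤ p * ‖x‖ ^ (p - 1) * ‖y‖ := h1
        _ ≤ p * (2 * ‖y‖ ^ (p - 1)) * ‖y‖ := by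
            apply mul_le_mul_of_nonneg_right _ hc0
            exact mul_le_mul_of_nonneg_left h3 hp0.le
        _ = 2 * p * (‖y‖ ^ (p - 1) * ‖y‖) := by ring
        _ = 2 * p * ‖y‖ ^ p := by rw [h5]
    have hxp : 0 ≤ ‖x‖ ^ p := Real.rpow_nonneg ha0 p
    linarith
  · -- Case B : 2‖y‖ < ‖x‖, second-order Taylor estimate along the segment
    set a := ‖x‖ with ha_def
    set c := ‖y‖ with hc_def
    set b : ℝ := inner ℝ x y with hb_def
    set q : ℝ → ℝ := fun t => a ^ 2 + 2 * b * t + c ^ 2 * t ^ 2 with hq_def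
    have hq_norm : ∀ t : ℝ, q t = ‖x + t • y‖ ^ 2 := by
      intro t
      have hsm : ‖t • y‖ = |t| * c := by rw [norm_smul, Real.norm_eq_abs]
      rw [norm_add_sq_real, real_inner_smul_right, hsm, mul_pow, sq_abs, hq_def]
      ring
    have hinner : ∀ t : ℝ, (inner ℝ (x + t • y) y : ℝ) = b + c ^ 2 * t := by
      intro t
      rw [inner_add_left, real_inner_smul_left, real_inner_self_eq_norm_sq]
      ring
    have hq_lb : ∀ t ∈ Icc (0:ℝ) 1, c ^ 2 ≤ q t := by
      intro t ht
      have h1 : a ≤ ‖x + t • y‖ + ‖t • y‖ := by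
        calc a = ‖(x + t • y) + (-(t • y))‖ := by rw [add_neg_cancel_right]
          _ ≤ ‖x + t • y‖ + ‖-(t • y)‖ := norm_add_le _ _
          _ = ‖x + t • y‖ + ‖t • y‖ := by rw [norm_neg]
      have h2 : ‖t • y‖ ≤ c := by
        rw [norm_smul, Real.norm_eq_abs, abs_of_nonneg ht.1]
        nlinarith [ht.2, hc0]
      have h3 : c ≤ ‖x + t • y‖ := by linarith
      rw [hq_norm t]
      nlinarith
    have hq_pos : ∀ t ∈ Icc (0:ℝ) 1, 0 < q t := by
      intro t ht
      have := hq_lb t ht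
      nlinarith
    -- derivative of q
    have hqd : ∀ t : ℝ, HasDerivAt q (2 * b + 2 * c ^ 2 * t) t := by
      intro t
      have h1 : HasDerivAt (fun s : ℝ => a ^ 2) 0 t := hasDerivAt_const t _
      have h2 : HasDerivAt (fun s : ℝ => 2 * b * s) (2 * b) t := by
        simpa using (hasDerivAt_id t).const_mul (2 * b)
      have h3 : HasDerivAt (fun s : ℝ => c ^ 2 * s ^ 2) (c ^ 2 * (2 * t)) t := by
        simpa using (hasDerivAt_pow 2 t).const_mul (c ^ 2)
      have h := (h1.add h2).add h3
      rw [hq_def]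
      refine h.congr_deriv ?_
      ring
    set F : ℝ → ℝ := fun t => q t ^ (p / 2) with hF_def
    set F' : ℝ → ℝ := fun t => p * q t ^ ((p - 2) / 2) * (b + c ^ 2 * t) with hF'_def
    set F'' : ℝ → ℝ := fun t =>
      p * (p - 2) * q t ^ ((p - 4) / 2) * (b + c ^ 2 * t) ^ 2
        + p * q t ^ ((p - 2) / 2) * c ^ 2 with hF''_def
    have hFd : ∀ t ∈ Icc (0:ℝ) 1, HasDerivAt F (F' t) t := by
      intro t ht
      have h := (hqd t).rpow_const (p := p / 2) (Or.inl (hq_pos t ht).ne')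
      rw [hF_def, hF'_def]
      convert h using 1
      rw [show p / 2 - 1 = (p - 2) / 2 by ring]
      ring
    have hF'd : ∀ t ∈ Icc (0:ℝ) 1, HasDerivAt F' (F'' t) t := by
      intro t ht
      have h1 := (hqd t).rpow_const (p := (p - 2) / 2) (Or.inl (hq_pos t ht).ne')
      have h2 : HasDerivAt (fun s : ℝ => b + c ^ 2 * s) (c ^ 2) t := by
        simpa using ((hasDerivAt_id t).const_mul (c ^ 2)).const_add b
      have h := (h1.const_mul p).mul h2
      rw [hF'_def, hF''_def]
      refine h.congr_deriv ?_
      show _ = p * (p - 2) * q t ^ ((p - 4) / 2) * (b + c ^ 2 * t) ^ 2 + p * q t ^ ((p - 2) / 2) * c ^ 2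
      rw [show (p - 2) / 2 - 1 = (p - 4) / 2 by ring]
      ring
    set M : ℝ := 2 * p * c ^ p with hM_def
    have hM_nonneg : 0 ≤ M := by
      have := Real.rpow_nonneg hc0 p
      rw [hM_def]; positivity
    have hcs : ∀ t : ℝ, (b + c ^ 2 * t) ^ 2 ≤ ‖x + t • y‖ ^ 2 * c ^ 2 := by
      intro t
      have h1 := abs_real_inner_le_norm (x + t • y) y
      rw [hinner t] at h1
      have h2 : (b + c ^ 2 * t) ^ 2 ≤ (‖x + t • y‖ * c) ^ 2 := by
        have h3 := abs_nonneg (b + c ^ 2 * t)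
        nlinarith [sq_abs (b + c ^ 2 * t)]
      nlinarith
    have hF''_bound : ∀ t ∈ Icc (0:ℝ) 1, |F'' t| ≤ M := by
      intro t ht
      have hQpos := hq_pos t ht
      have hQlb := hq_lb t ht
      have hcs' : (b + c ^ 2 * t) ^ 2 ≤ q t * c ^ 2 := by
        have := hcs t; rw [← hq_norm t] at this; exact this
      have hr1 : q t ^ ((p - 4) / 2) * q t = q t ^ ((p - 2) / 2) := by
        rw [show (p - 2) / 2 = (p - 4) / 2 + 1 by ring, Real.rpow_add_one hQpos.ne']
      have hr2 : q t ^ ((p - 2) / 2) ≤ (c ^ 2) ^ ((p - 2) / 2) :=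
        Real.rpow_le_rpow_of_nonpos (by positivity) hQlb (by linarith)
      have hr3 : (c ^ 2) ^ ((p - 2) / 2) = c ^ (p - 2) := sq_rpow_half c (p - 2) hc0
      have hr4 : c ^ (p - 2) * c ^ 2 = c ^ p := by
        rw [← Real.rpow_natCast c 2, ← Real.rpow_add hc]
        norm_num
      have hQr_pos : 0 < q t ^ ((p - 2) / 2) := Real.rpow_pos_of_pos hQpos _
      have hQr4_pos : 0 < q t ^ ((p - 4) / 2) := Real.rpow_pos_of_pos hQpos _
      -- |F'' t| ≤ |first term| + second term
      have habs : |F'' t| ≤ p * (2 - p) * q t ^ ((p - 4) / 2) * (b + c ^ 2 * t) ^ 2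
          + p * q t ^ ((p - 2) / 2) * c ^ 2 := by
        rw [hF''_def]
        have h1 : |p * (p - 2) * q t ^ ((p - 4) / 2) * (b + c ^ 2 * t) ^ 2|
            = p * (2 - p) * q t ^ ((p - 4) / 2) * (b + c ^ 2 * t) ^ 2 := by
          have h0a : p * (p - 2) ≤ 0 := by nlinarith
          have h0b : 0 ≤ q t ^ ((p - 4) / 2) * (b + c ^ 2 * t) ^ 2 :=
            mul_nonneg hQr4_pos.le (sq_nonneg _)
          have h0 : p * (p - 2) * q t ^ ((p - 4) / 2) * (b + c ^ 2 * t) ^ 2 ≤ 0 := by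
            calc p * (p - 2) * q t ^ ((p - 4) / 2) * (b + c ^ 2 * t) ^ 2
                = (p * (p - 2)) * (q t ^ ((p - 4) / 2) * (b + c ^ 2 * t) ^ 2) := by ring
              _ ≤ 0 := mul_nonpos_iff.mpr (Or.inr ⟨h0a, h0b⟩)
          rw [abs_of_nonpos h0]
          ring
        calc |p * (p - 2) * q t ^ ((p - 4) / 2) * (b + c ^ 2 * t) ^ 2
              + p * q t ^ ((p - 2) / 2) * c ^ 2|
            ≤ |p * (p - 2) * q t ^ ((p - 4) / 2) * (b + c ^ 2 * t) ^ 2|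
              + |p * q t ^ ((p - 2) / 2) * c ^ 2| := abs_add_le _ _
          _ = p * (2 - p) * q t ^ ((p - 4) / 2) * (b + c ^ 2 * t) ^ 2
              + p * q t ^ ((p - 2) / 2) * c ^ 2 := by
              rw [h1, abs_of_nonneg (by positivity)]
      have hstep : p * (2 - p) * q t ^ ((p - 4) / 2) * (b + c ^ 2 * t) ^ 2
          ≤ p * (2 - p) * q t ^ ((p - 2) / 2) * c ^ 2 := by
        have h2 : p * (2 - p) * q t ^ ((p - 4) / 2) * (b + c ^ 2 * t) ^ 2
            ≤ p * (2 - p) * q t ^ ((p - 4) / 2) * (q t * c ^ 2) := by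
          apply mul_le_mul_of_nonneg_left hcs'
          exact mul_nonneg (mul_nonneg hp0.le (by linarith)) hQr4_pos.le
        calc p * (2 - p) * q t ^ ((p - 4) / 2) * (b + c ^ 2 * t) ^ 2
            ≤ p * (2 - p) * q t ^ ((p - 4) / 2) * (q t * c ^ 2) := h2
          _ = p * (2 - p) * (q t ^ ((p - 4) / 2) * q t) * c ^ 2 := by ring
          _ = p * (2 - p) * q t ^ ((p - 2) / 2) * c ^ 2 := by rw [hr1]
      have hfinal : p * (2 - p) * q t ^ ((p - 2) / 2) * c ^ 2
          + p * q t ^ ((p - 2) / 2) * c ^ 2 ≤ M := by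
        have h3 : p * (2 - p) * q t ^ ((p - 2) / 2) * c ^ 2
            + p * q t ^ ((p - 2) / 2) * c ^ 2
            = p * (3 - p) * (q t ^ ((p - 2) / 2) * c ^ 2) := by ring
        rw [h3, hM_def]
        have h4 : q t ^ ((p - 2) / 2) * c ^ 2 ≤ c ^ p := by
          calc q t ^ ((p - 2) / 2) * c ^ 2 ≤ (c ^ 2) ^ ((p - 2) / 2) * c ^ 2 := by
                apply mul_le_mul_of_nonneg_right hr2; positivity
            _ = c ^ (p - 2) * c ^ 2 := by rw [hr3]
            _ = c ^ p := hr4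
        have h5 : p * (3 - p) ≤ 2 * p := by nlinarith
        have h6 : 0 ≤ q t ^ ((p - 2) / 2) * c ^ 2 := by positivity
        have h7 : 0 ≤ c ^ p := Real.rpow_nonneg hc0 p
        nlinarith
      linarith
    -- MVT, step 1 : |F' t - F' 0| ≤ M * t on [0,1]
    have hstep1 : ∀ t ∈ Icc (0:ℝ) 1, ‖F' t - F' 0‖ ≤ M * (t - 0) :=
      norm_image_sub_le_of_norm_deriv_le_segment'
        (fun t ht => (hF'd t ht).hasDerivWithinAt)
        (fun t ht => by
          rw [Real.norm_eq_abs]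
          exact hF''_bound t (Ico_subset_Icc_self ht))
    -- MVT, step 2 : |F 1 - F 0 - F' 0| ≤ M
    have hstep2 : ‖(F 1 - 1 * F' 0) - (F 0 - 0 * F' 0)‖ ≤ M * (1 - 0) := by
      refine norm_image_sub_le_of_norm_deriv_le_segment'
        (f := fun t => F t - t * F' 0) (f' := fun t => F' t - F' 0)
        (fun t ht => by
          have h := ((hFd t ht).sub ((hasDerivAt_id t).mul_const (F' 0))).hasDerivWithinAt
            (s := Icc (0:ℝ) 1)
          simp at h; exact h)
        (fun t ht => ?_) 1 (right_mem_Icc.mpr zero_le_one)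
      have h1 := hstep1 t (Ico_subset_Icc_self ht)
      have h2 : M * (t - 0) ≤ M := by nlinarith [ht.1, ht.2, hM_nonneg]
      calc ‖F' t - F' 0‖ ≤ M * (t - 0) := h1
        _ ≤ M := h2
    -- identify F 1, F 0, F' 0 with the statement's quantities
    have hid1 : F 1 = ‖x + y‖ ^ p := by
      rw [hF_def]
      simp only []
      rw [hq_norm 1, one_smul, sq_rpow_half _ _ (norm_nonneg _)]
    have hid0 : F 0 = a ^ p := by
      rw [hF_def]
      simp only []
      have : q 0 = a ^ 2 := by rw [hq_def]; ring
      rw [this, sq_rpow_half _ _ ha0]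
    have hid0' : F' 0 = p * a ^ (p - 2) * b := by
      rw [hF'_def]
      simp only []
      have : q 0 = a ^ 2 := by rw [hq_def]; ring
      rw [this, sq_rpow_half _ _ ha0]
      ring
    rw [hid1, hid0, hid0'] at hstep2
    rw [Real.norm_eq_abs] at hstep2
    have h8 : ‖x + y‖ ^ p - a ^ p - p * a ^ (p - 2) * b ≤ M * (1 - 0) := by
      have := abs_le.mp hstep2
      linarith [this.2]
    have h9 : 0 ≤ 3 ^ p * c ^ p := by
      have := Real.rpow_nonneg hc0 p
      positivity
    rw [hM_def] at h8
    calc ‖x + y‖ ^ p - a ^ p - p * a ^ (p - 2) * b ≤ 2 * p * c ^ p := by linarith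
      _ ≤ (3 ^ p + 2 * p) * c ^ p := by nlinarith [Real.rpow_nonneg hc0 p]
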